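/- arXiv:1612.08884 — 6 statements merged into one kernel-verified Lean document; each statement's English description precedes it below -/
import Mathlib

section
/- Every middleman in an undirected network is a strong middleman: if D is a network on node set N such that (i,j) ∈ D if and only if (j,i) ∈ D, then for every middleman h ∈ M(D) the reduced network D − h is not weakly connected. -/
open Finset

variable {V : Type*} [Fintype V] [DecidableEq V]

/-- The arc set is irreflexive: no loops. -/
def IrreflArcs (D : Finset (V × V)) : Prop := ∀ i : V, (i, i) ∉ D

/-- `l` is an `(i,j)`-path in `D`: a list of pairwise distinct nodes, of length at
least 2, starting at `i`, ending at `j`, consecutive nodes joined by arcs of `D`. -/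
def IsPath (D : Finset (V × V)) (i j : V) (l : List V) : Prop :=
  l.Nodup ∧ l.Chain' (fun a b => (a, b) ∈ D) ∧
    l.head? = some i ∧ l.getLast? = some j ∧ 2 ≤ l.length

/-- Node `i` is connected to node `j`: there is at least one `(i,j)`-path. -/
def Conn (D : Finset (V × V)) (i j : V) : Prop := ∃ l : List V, IsPath D i j l

/-- The direct successors `s_i(D)`. -/
def dsucc (D : Finset (V × V)) (i : V) : Finset V := univ.filter fun j => (i, j) ∈ D

/-- The direct predecessors `p_i(D)`. -/
def dpred (D : Finset (V × V)) (i : V) : Finset V := univ.filter fun j => (j, i) ∈ D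

open scoped Classical in
/-- The successor set `S_i(D)`: all nodes to which `i` is connected. -/
noncomputable def succC (D : Finset (V × V)) (i : V) : Finset V :=
  univ.filter fun j => Conn D i j

open scoped Classical in
/-- The predecessor set `P_i(D)`: all nodes that are connected to `i`. -/
noncomputable def predC (D : Finset (V × V)) (i : V) : Finset V :=
  univ.filter fun j => Conn D j i

/-- An intermediary: at least one direct predecessor, at least one direct successor,
and at least two distinct direct neighbours. -/
def Intermediary (D : Finset (V × V)) (i : V) : Prop :=
  (dpred D i).Nonempty ∧ (dsucc D i).Nonempty ∧ 2 ≤ (dsucc D i ∪ dpred D i).card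

/-- The induced subnetwork `D_M` on a node set `M`. -/
def inducedOn (D : Finset (V × V)) (M : Finset V) : Finset (V × V) :=
  D.filter fun e => e.1 ∈ M ∧ e.2 ∈ M

/-- The reduced network `D − i`. -/
def removeNode (D : Finset (V × V)) (i : V) : Finset (V × V) :=
  D.filter fun e => e.1 ≠ i ∧ e.2 ≠ i

/-- The reduced network `D − C`, removing a node set `C`. -/
def removeNodes (D : Finset (V × V)) (C : Finset V) : Finset (V × V) :=
  D.filter fun e => e.1 ∉ C ∧ e.2 ∉ C

/-- `h` is an `(i,j)`-middleman: `i ≠ j`, `h ∉ {i,j}`, there is at least one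
`(i,j)`-path, and `h` lies on every `(i,j)`-path. -/
def MmBetween (D : Finset (V × V)) (h i j : V) : Prop :=
  i ≠ j ∧ h ≠ i ∧ h ≠ j ∧ Conn D i j ∧ ∀ l : List V, IsPath D i j l → h ∈ l

/-- `h` is a middleman: an intermediary that is an `(i,j)`-middleman for some pair. -/
def IsMiddleman (D : Finset (V × V)) (h : V) : Prop :=
  Intermediary D h ∧ ∃ i j : V, MmBetween D h i j

/-- The network is weakly connected. -/
def WeakConn (D : Finset (V × V)) : Prop :=
  ∀ i j : V, i ≠ j → Conn D i j ∨ Conn D j i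

/-- The network `(M, D_M)` is weakly connected. -/
def WeakConnOn (D : Finset (V × V)) (M : Finset V) : Prop :=
  ∀ i ∈ M, ∀ j ∈ M, i ≠ j → Conn (inducedOn D M) i j ∨ Conn (inducedOn D M) j i

/-- The network is strongly connected. -/
def StrongConn (D : Finset (V × V)) : Prop :=
  ∀ i j : V, i ≠ j → Conn D i j

/-- `M` is a component of `D`. -/
def IsComponent (D : Finset (V × V)) (M : Finset V) : Prop :=
  WeakConnOn D M ∧ ∀ i ∉ M, ¬ WeakConnOn D (insert i M)

/-- The coverage `Γ_i(D)` of an intermediary `i`. -/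
noncomputable def coverage (D : Finset (V × V)) (i : V) : Finset (V × V) :=
  (predC D i ×ˢ succC D i).filter fun e => e.1 ≠ e.2

/-- The extended coverage `Γ̄_j(D)` of a node `j`. -/
noncomputable def extCoverage (D : Finset (V × V)) (j : V) : Finset (V × V) :=
  insert j (predC D j) ×ˢ insert j (succC D j)

/-- Intermediary `i` is contested by the node set `C ⊆ N \ {i}`. -/
def ContestedBy (D : Finset (V × V)) (i : V) (C : Finset V) : Prop :=
  i ∉ C ∧ coverage D i ⊆ C.biUnion fun j => extCoverage (removeNode D i) j

/-- The brokerage `b_i(D)`. -/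
noncomputable def brokerage (D : Finset (V × V)) (i : V) : ℤ :=
  (∑ j ∈ univ.erase i,
      (((succC D j).card : ℤ) - ((succC (removeNode D i) j).card : ℤ)))
    - ((predC D i).card : ℤ)

/-- The maximal potential brokerage `B(D)`. -/
noncomputable def maxBrokerage (D : Finset (V × V)) : ℤ :=
  ∑ i : V, (((succC D i).card : ℤ) - ((dsucc D i).card : ℤ))

/-- The middleman power measure `ν_i(D) = b_i(D) / max{B(D), 1}`. -/
noncomputable def power (D : Finset (V × V)) (i : V) : ℚ :=
  (brokerage D i : ℚ) / ((max (maxBrokerage D) 1 : ℤ) : ℚ)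

/-- The robustness `ρ_i(D)` of a middleman `i`. -/
noncomputable def robustness (D : Finset (V × V)) (i : V) : ℕ :=
  sInf {m : ℕ | ∃ D' : Finset (V × V),
      IrreflArcs D' ∧ D ⊂ D' ∧ ¬ IsMiddleman D' i ∧ D'.card = m} - D.card

/-- The dual robustness `ρ*_i(D)` of a middleman `i`. -/
noncomputable def dualRobustness (D : Finset (V × V)) (i : V) : ℕ :=
  D.card - sSup {m : ℕ | ∃ D' : Finset (V × V),
      D' ⊆ D ∧ ¬ IsMiddleman D' i ∧ D'.card = m}

/-- The node-robustness `ψ_i(D)` of a middleman `i`. -/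
noncomputable def nodeRobustness (D : Finset (V × V)) (i : V) : ℕ :=
  sInf {m : ℕ | ∃ C : Finset V,
      i ∉ C ∧ ¬ IsMiddleman (removeNodes D C) i ∧ C.card = m}

/-- Direct neighbours in the underlying undirected network. -/
def nbr (D : Finset (V × V)) (i : V) : Finset V := dsucc D i ∪ dpred D i

/-- The local clustering coefficient `C_i = 2 L_i / (d_i (d_i − 1))`, computed here as
the number of ordered adjacent pairs of neighbours divided by `d_i (d_i − 1)`. -/
def clustering (D : Finset (V × V)) (i : V) : ℚ :=
  (((nbr D i ×ˢ nbr D i).filter fun e =>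
      e.1 ≠ e.2 ∧ ((e.1, e.2) ∈ D ∨ (e.2, e.1) ∈ D)).card : ℚ)
    / (((nbr D i).card : ℚ) * (((nbr D i).card : ℚ) - 1))

lemma isPath_mono {D D' : Finset (V × V)} (hsub : D ⊆ D') {i j : V} {l : List V}
    (hp : IsPath D i j l) : IsPath D' i j l := by
  obtain ⟨h1, h2, h3, h4, h5⟩ := hp
  exact ⟨h1, h2.imp (fun a b hab => hsub hab), h3, h4, h5⟩

lemma chain_mem {D : Finset (V × V)} {M : Finset V} :
    ∀ l : List V, l.Chain' (fun a b => (a, b) ∈ inducedOn D M) → 2 ≤ l.length →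
      ∀ x ∈ l, x ∈ M := by
  intro l
  induction l with
  | nil => simp
  | cons a t ih =>
    cases t with
    | nil => simp
    | cons b t' =>
      intro hc _ x hx
      unfold List.Chain' at hc; rw [List.isChain_cons_cons] at hc
      have hab : a ∈ M ∧ b ∈ M := by
        have h1 := hc.1
        simp only [inducedOn, Finset.mem_filter] at h1
        exact ⟨h1.2.1, h1.2.2⟩
      rcases List.mem_cons.1 hx with rfl | hx
      · exact hab.1
      · cases t' with
        | nil => simp at hx; subst hx; exact hab.2
        | cons c t'' => exact ih hc.2 (by simp) x hx

lemma conn_rev {D : Finset (V × V)} (hsym : ∀ a b : V, (a, b) ∈ D ↔ (b, a) ∈ D)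
    {i j : V} (h : Conn D i j) : Conn D j i := by
  obtain ⟨l, h1, h2, h3, h4, h5⟩ := h
  refine ⟨l.reverse, List.nodup_reverse.mpr h1, ?_, ?_, ?_, by simpa⟩
  · unfold List.Chain'; rw [List.isChain_reverse]
    exact h2.imp fun a b hab => (hsym a b).mp hab
  · rw [List.head?_reverse]; exact h4
  · rw [List.getLast?_reverse]; exact h3

/-- Every middleman in an undirected network is a strong middleman: the reduced
network `D − h` is not weakly connected. -/
theorem statement6 {V : Type*} [Fintype V] [DecidableEq V] (D : Finset (V × V))
    (hirr : IrreflArcs D) (hund : ∀ i j : V, (i, j) ∈ D ↔ (j, i) ∈ D) :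
    ∀ h : V, IsMiddleman D h → ¬ WeakConnOn D (Finset.univ.erase h) := by
  rintro h ⟨-, i, j, hij, hhi, hhj, -, hall⟩ hw
  have hsym : ∀ a b : V, (a, b) ∈ inducedOn D (Finset.univ.erase h) ↔
      (b, a) ∈ inducedOn D (Finset.univ.erase h) := by
    intro a b
    simp only [inducedOn, Finset.mem_filter]
    constructor
    · rintro ⟨hd, h1, h2⟩; exact ⟨(hund a b).mp hd, h2, h1⟩
    · rintro ⟨hd, h1, h2⟩; exact ⟨(hund b a).mp hd, h2, h1⟩
  have key : ¬ Conn (inducedOn D (Finset.univ.erase h)) i j := by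
    rintro ⟨l, hp⟩
    have hmem := hall l (isPath_mono (Finset.filter_subset _ _) hp)
    have hhM := chain_mem l hp.2.1 hp.2.2.2.2 h hmem
    exact (Finset.mem_erase.1 hhM).1 rfl
  have hi : i ∈ Finset.univ.erase h := Finset.mem_erase.2 ⟨Ne.symm hhi, Finset.mem_univ _⟩
  have hj : j ∈ Finset.univ.erase h := Finset.mem_erase.2 ⟨Ne.symm hhj, Finset.mem_univ _⟩
  rcases hw i hi j hj hij with hc | hc
  · exact key hc
  · exact key (conn_rev hsym hc)
end

section
/- Let D be a directed network on node set N with #N ≥ 3. Every middleman i ∈ M(D) is an uncontested intermediary in D: there exists no node set C ⊆ N \ {i} that contests i. -/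
open Finset

variable {V : Type*} [Fintype V] [DecidableEq V]

section Helpers
variable {V : Type*} [Fintype V] [DecidableEq V]

private lemma two_le_len {l : List V} {a b : V} (ha : l.head? = some a)
    (hb : l.getLast? = some b) (hab : a ≠ b) : 2 ≤ l.length := by
  match l with
  | [] => simp at ha
  | [x] =>
    simp at ha hb
    exact absurd (ha.symm.trans hb) hab
  | x :: y :: t => simp

private lemma exists_dup_decomp : ∀ (l : List V), ¬ l.Nodup →
    ∃ (x : V) (l₁ l₂ l₃ : List V), l = l₁ ++ x :: (l₂ ++ x :: l₃) := by
  intro l hl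
  induction l with
  | nil => simp at hl
  | cons a t ih =>
    by_cases ha : a ∈ t
    · obtain ⟨l₂, l₃, rfl⟩ := List.append_of_mem ha
      exact ⟨a, [], l₂, l₃, rfl⟩
    · have ht : ¬ t.Nodup := fun h => hl (List.nodup_cons.mpr ⟨ha, h⟩)
      obtain ⟨x, l₁, l₂, l₃, rfl⟩ := ih ht
      exact ⟨x, a :: l₁, l₂, l₃, rfl⟩

private lemma walk_to_path {R : V → V → Prop} :
    ∀ (n : ℕ) (l : List V), l.length ≤ n → l.Chain' R →
    ∀ a b : V, a ≠ b → l.head? = some a → l.getLast? = some b →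
    ∃ m : List V, m.Nodup ∧ m.Chain' R ∧ m.head? = some a ∧ m.getLast? = some b ∧
      2 ≤ m.length := by
  intro n
  induction n with
  | zero =>
    intro l hl _ a b _ ha _
    have : l = [] := List.length_eq_zero_iff.mp (Nat.le_zero.mp hl)
    subst this; simp at ha
  | succ n ih =>
    intro l hl hc a b hab ha hb
    by_cases hnd : l.Nodup
    · exact ⟨l, hnd, hc, ha, hb, two_le_len ha hb hab⟩
    · obtain ⟨x, l₁, l₂, l₃, rfl⟩ := exists_dup_decomp l hnd
      refine ih (l₁ ++ x :: l₃) ?_ ?_ a b hab ?_ ?_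
      · simp only [List.length_append, List.length_cons] at hl ⊢
        omega
      · rw [show List.Chain' = List.IsChain from rfl, List.isChain_append] at hc ⊢
        obtain ⟨h1, h2, h3⟩ := hc
        refine ⟨h1, h2.suffix ⟨x :: l₂, by simp⟩, ?_⟩
        intro y hy z hz
        simp only [List.head?_cons, Option.mem_def, Option.some.injEq] at hz
        subst hz
        exact h3 y hy x (by simp)
      · cases l₁ with
        | nil => simpa using ha
        | cons e t => simpa using ha
      · rw [List.getLast?_append_cons]
        rw [List.getLast?_append_cons,
          show x :: (l₂ ++ x :: l₃) = (x :: l₂) ++ x :: l₃ by simp,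
          List.getLast?_append_cons] at hb
        exact hb

private lemma conn_trans {D : Finset (V × V)} {a j b : V} (hab : a ≠ b)
    (h1 : Conn D a j) (h2 : Conn D j b) : Conn D a b := by
  obtain ⟨p, _, hpc, hph, hpl, hplen⟩ := h1
  obtain ⟨q, _, hqc, hqh, hql, hqlen⟩ := h2
  cases q with
  | nil => simp at hqh
  | cons c t =>
    simp only [List.head?_cons, Option.some.injEq] at hqh
    subst hqh
    cases t with
    | nil => simp at hqlen
    | cons d t' =>
      cases p with
      | nil => simp at hph
      | cons e p' =>
        simp only [List.head?_cons, Option.some.injEq] at hph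
        subst hph
        refine walk_to_path ((e :: p') ++ d :: t').length _ le_rfl ?_ e b hab ?_ ?_
        · rw [show List.Chain' = List.IsChain from rfl, List.isChain_append]
          refine ⟨hpc, (List.isChain_cons_cons.mp hqc).2, ?_⟩
          intro y hy z hz
          simp only [List.head?_cons, Option.mem_def, Option.some.injEq] at hz
          subst hz
          have hyc : y = c := by
            rw [Option.mem_def, hpl] at hy
            exact (Option.some.inj hy).symm
          subst hyc
          exact (List.isChain_cons_cons.mp hqc).1
        · simp
        · rw [List.getLast?_append_cons]
          rw [show c :: d :: t' = [c] ++ d :: t' from rfl,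
            List.getLast?_append_cons] at hql
          exact hql

private lemma conn_split {D : Finset (V × V)} {a b i : V} {l : List V}
    (hp : IsPath D a b l) (hi : i ∈ l) (hia : i ≠ a) (hib : i ≠ b) :
    Conn D a i ∧ Conn D i b := by
  obtain ⟨hnd, hc, hh, hl, _⟩ := hp
  obtain ⟨l₁, l₂, rfl⟩ := List.append_of_mem hi
  have hl₁ : l₁ ≠ [] := by
    rintro rfl
    simp only [List.nil_append, List.head?_cons, Option.some.injEq] at hh
    exact hia hh
  have hl₂ : l₂ ≠ [] := by
    rintro rfl
    rw [List.getLast?_append_cons] at hl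
    simp only [List.getLast?_singleton, Option.some.injEq] at hl
    exact hib hl
  constructor
  · refine ⟨l₁ ++ [i], ?_, ?_, ?_, ?_, ?_⟩
    · exact hnd.sublist (((List.nil_sublist l₂).cons₂ i).append_left l₁)
    · exact hc.prefix ⟨l₂, by simp⟩
    · cases l₁ with
      | nil => exact absurd rfl hl₁
      | cons e t => simpa using hh
    · simp
    · cases l₁ with
      | nil => exact absurd rfl hl₁
      | cons e t => simp
  · refine ⟨i :: l₂, ?_, ?_, ?_, ?_, ?_⟩
    · exact hnd.sublist (List.sublist_append_right l₁ (i :: l₂))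
    · exact hc.suffix ⟨l₁, rfl⟩
    · simp
    · rw [List.getLast?_append_cons] at hl
      exact hl
    · cases l₂ with
      | nil => exact absurd rfl hl₂
      | cons e t => simp

private lemma mem_arc {R : V → V → Prop} :
    ∀ (l : List V), l.Chain' R → 2 ≤ l.length → ∀ x ∈ l,
      (∃ y, R x y) ∨ (∃ y, R y x) := by
  intro l
  induction l with
  | nil => simp
  | cons a t ih =>
    intro hc hlen x hx
    cases t with
    | nil => simp at hlen
    | cons c t' =>
      rw [show List.Chain' = List.IsChain from rfl, List.isChain_cons_cons] at hc
      rcases List.mem_cons.mp hx with rfl | hx'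
      · exact Or.inl ⟨c, hc.1⟩
      · cases t' with
        | nil =>
          have : x = c := by simpa using hx'
          subst this
          exact Or.inr ⟨a, hc.1⟩
        | cons d t'' => exact ih hc.2 (by simp) x hx'

end Helpers

/-- Every middleman `i ∈ M(D)` is an uncontested intermediary in `D`: there exists no
node set `C ⊆ N \ {i}` that contests `i`. -/
theorem statement9 {V : Type*} [Fintype V] [DecidableEq V] (D : Finset (V × V))
    (hirr : IrreflArcs D) (hcard : 3 ≤ Fintype.card V)
    (i : V) (hm : IsMiddleman D i) :
    ¬ ∃ C : Finset V, ContestedBy D i C := by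
  rintro ⟨C, hiC, hsub⟩
  obtain ⟨-, a, b, hab, hia, hib, hconn, hall⟩ := hm
  obtain ⟨l, hl⟩ := hconn
  obtain ⟨hai, hbi⟩ := conn_split hl (hall l hl) hia hib
  have hmem : (a, b) ∈ coverage D i := by
    simp only [coverage, Finset.mem_filter, Finset.mem_product, predC, succC,
      Finset.mem_univ, true_and]
    exact ⟨⟨hai, hbi⟩, hab⟩
  obtain ⟨j, hjC, hj⟩ := Finset.mem_biUnion.mp (hsub hmem)
  rw [extCoverage, Finset.mem_product] at hj
  obtain ⟨hja, hjb⟩ := hj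
  simp only [Finset.mem_insert, predC, succC, Finset.mem_filter, Finset.mem_univ,
    true_and] at hja hjb
  have hconn' : Conn (removeNode D i) a b := by
    rcases hja with rfl | hja <;> rcases hjb with rfl | hjb
    · exact absurd rfl hab
    · exact hjb
    · exact hja
    · exact conn_trans hab hja hjb
  obtain ⟨m, hnd, hcm, hhm, hlm, hlenm⟩ := hconn'
  have him : i ∉ m := by
    intro him
    rcases mem_arc m hcm hlenm i him with ⟨y, hy⟩ | ⟨y, hy⟩
    · exact (Finset.mem_filter.mp hy).2.1 rfl
    · exact (Finset.mem_filter.mp hy).2.2 rfl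
  have hpath : IsPath D a b m :=
    ⟨hnd, hcm.imp (fun x y hxy => (Finset.mem_filter.mp hxy).1), hhm, hlm, hlenm⟩
  exact him (hall m hpath)
end

section
/- Let D be a directed network on node set N. For every node i ∈ N, the middleman power measure satisfies 0 ≤ ν_i(D) ≤ 1. -/
open Finset

variable {V : Type*} [Fintype V] [DecidableEq V]

section AuxMM

private lemma connAux_mono {D D' : Finset (V × V)} (h : D ⊆ D') {i j : V}
    (hc : Conn D i j) : Conn D' i j := by
  obtain ⟨l, hn, hch, h1, h2, h3⟩ := hc
  exact ⟨l, hn, hch.imp (fun a b hab => h hab), h1, h2, h3⟩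

private lemma connAux_ne {D : Finset (V × V)} {i j : V} (hc : Conn D i j) : i ≠ j := by
  obtain ⟨l, hn, hch, h1, h2, h3⟩ := hc
  rcases l with _ | ⟨a, _ | ⟨b, t⟩⟩
  · simp at h1
  · simp at h3
  · simp only [List.head?_cons, Option.some.injEq] at h1
    rw [List.getLast?_cons_cons] at h2
    have hj : j ∈ b :: t := List.mem_of_mem_getLast? (by rw [h2]; simp)
    intro hij
    exact (List.nodup_cons.mp hn).1 (h1 ▸ hij ▸ hj)

private lemma chainLastArc {α : Type*} {R : α → α → Prop} {j : α} :
    ∀ l : List α, l.Chain' R → l.getLast? = some j → 2 ≤ l.length → ∃ y, R y j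
  | [] => by simp
  | [a] => by simp
  | [a, b] => by
    intro hch h2 _
    have hb : b = j := by simpa using h2
    subst hb
    exact ⟨a, by simpa [List.Chain', List.isChain_pair] using hch⟩
  | a :: b :: c :: t => fun hch h2 _ =>
    chainLastArc (b :: c :: t) hch.tail
      (by rwa [List.getLast?_cons_cons] at h2) (by simp)

private lemma connAux_last {D : Finset (V × V)} {i j : V} (hc : Conn D i j) :
    ∃ y, (y, j) ∈ D := by
  obtain ⟨l, _, hch, _, h2, h3⟩ := hc
  exact chainLastArc l hch h2 h3

private lemma arcConn {D : Finset (V × V)} {i j : V} (h : (i, j) ∈ D) (hne : i ≠ j) :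
    Conn D i j :=
  ⟨[i, j], by simp [IsPath, hne, h, List.Chain', List.isChain_pair]⟩

end AuxMM

/-- For every node `i`, the middleman power measure satisfies `0 ≤ ν_i(D) ≤ 1`. -/
theorem statement11 {V : Type*} [Fintype V] [DecidableEq V] (D : Finset (V × V))
    (hirr : IrreflArcs D) :
    ∀ i : V, 0 ≤ power D i ∧ power D i ≤ 1 := by
  classical
  intro i
  -- basic subset facts
  have hsub : ∀ j : V, succC (removeNode D i) j ⊆ succC D j := by
    intro j k hk
    simp only [succC, Finset.mem_filter, Finset.mem_univ, true_and] at hk ⊢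
    exact connAux_mono (Finset.filter_subset _ _) hk
  have hni : ∀ j : V, i ∉ succC (removeNode D i) j := by
    intro j hmem
    simp only [succC, Finset.mem_filter, Finset.mem_univ, true_and] at hmem
    obtain ⟨y, hy⟩ := connAux_last hmem
    simp [removeNode] at hy
  have hdsub : ∀ j : V, dsucc D j ⊆ succC D j := by
    intro j k hk
    simp only [dsucc, Finset.mem_filter, Finset.mem_univ, true_and] at hk
    simp only [succC, Finset.mem_filter, Finset.mem_univ, true_and]
    refine arcConn hk (fun h => hirr j ?_)
    subst h; exact hk
  have hterm_nonneg : ∀ j : V,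
      (0:ℤ) ≤ ((succC D j).card : ℤ) - ((dsucc D j).card : ℤ) := by
    intro j
    have := Finset.card_le_card (hdsub j)
    omega
  -- lower bound on each summand
  have hlow : ∀ j ∈ univ.erase i,
      (if Conn D j i then (1:ℤ) else 0)
        ≤ ((succC D j).card : ℤ) - ((succC (removeNode D i) j).card : ℤ) := by
    intro j _
    by_cases hc : Conn D j i
    · rw [if_pos hc]
      have h1 : succC (removeNode D i) j ⊆ (succC D j).erase i := fun k hk =>
        Finset.mem_erase.mpr ⟨fun he => hni j (he ▸ hk), hsub j hk⟩
      have hmem : i ∈ succC D j := by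
        simp only [succC, Finset.mem_filter, Finset.mem_univ, true_and]; exact hc
      have h2 := Finset.card_le_card h1
      rw [Finset.card_erase_of_mem hmem] at h2
      have hpos : 1 ≤ (succC D j).card := Finset.card_pos.mpr ⟨i, hmem⟩
      omega
    · rw [if_neg hc]
      have := Finset.card_le_card (hsub j)
      omega
  have hfe : (univ.erase i).filter (fun j => Conn D j i) = predC D i := by
    ext j
    simp only [predC, Finset.mem_filter, Finset.mem_erase, Finset.mem_univ, true_and,
      and_true]
    exact ⟨fun h => h.2, fun h => ⟨connAux_ne h, h⟩⟩
  have hsumlow : ((predC D i).card : ℤ)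
      ≤ ∑ j ∈ univ.erase i,
          (((succC D j).card : ℤ) - ((succC (removeNode D i) j).card : ℤ)) := by
    calc ((predC D i).card : ℤ)
        = ∑ j ∈ univ.erase i, (if Conn D j i then (1:ℤ) else 0) := by
          rw [Finset.sum_boole, hfe]
      _ ≤ _ := Finset.sum_le_sum hlow
  have hb0 : 0 ≤ brokerage D i := by
    unfold brokerage
    linarith [hsumlow]
  -- upper bound on each summand
  have hup : ∀ j ∈ univ.erase i,
      ((succC D j).card : ℤ) - ((succC (removeNode D i) j).card : ℤ)
        ≤ (((succC D j).card : ℤ) - ((dsucc D j).card : ℤ))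
          + (if (j, i) ∈ D then (1:ℤ) else 0) := by
    intro j hj
    have hji : j ≠ i := (Finset.mem_erase.mp hj).1
    have h1 : (dsucc D j).erase i ⊆ succC (removeNode D i) j := by
      intro k hk
      rw [Finset.mem_erase] at hk
      obtain ⟨hki, hk2⟩ := hk
      simp only [dsucc, Finset.mem_filter, Finset.mem_univ, true_and] at hk2
      simp only [succC, Finset.mem_filter, Finset.mem_univ, true_and]
      refine arcConn ?_ (fun h => hirr j ?_)
      · simp only [removeNode, Finset.mem_filter]
        exact ⟨hk2, hji, hki⟩
      · subst h; exact hk2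
    have h2 := Finset.card_le_card h1
    by_cases hmem : i ∈ dsucc D j
    · rw [Finset.card_erase_of_mem hmem] at h2
      have harc : (j, i) ∈ D := by
        simpa only [dsucc, Finset.mem_filter, Finset.mem_univ, true_and] using hmem
      rw [if_pos harc]
      have hpos : 1 ≤ (dsucc D j).card := Finset.card_pos.mpr ⟨i, hmem⟩
      omega
    · rw [Finset.erase_eq_of_notMem hmem] at h2
      have harc : (j, i) ∉ D := by
        simpa only [dsucc, Finset.mem_filter, Finset.mem_univ, true_and] using hmem
      rw [if_neg harc]
      omega
  have hdp : (univ.erase i).filter (fun j => (j, i) ∈ D) = dpred D i := by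
    ext j
    simp only [dpred, Finset.mem_filter, Finset.mem_erase, Finset.mem_univ, true_and,
      and_true]
    refine ⟨fun h => h.2, fun h => ⟨fun he => hirr i ?_, h⟩⟩
    subst he; exact h
  have hdpc : (dpred D i).card ≤ (predC D i).card := by
    refine Finset.card_le_card (fun j hj => ?_)
    simp only [dpred, Finset.mem_filter, Finset.mem_univ, true_and] at hj
    simp only [predC, Finset.mem_filter, Finset.mem_univ, true_and]
    refine arcConn hj (fun h => hirr i ?_)
    subst h; exact hj
  have hsumup : ∑ j ∈ univ.erase i,
      (((succC D j).card : ℤ) - ((succC (removeNode D i) j).card : ℤ))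
        ≤ (∑ j ∈ univ.erase i, (((succC D j).card : ℤ) - ((dsucc D j).card : ℤ)))
          + ((predC D i).card : ℤ) := by
    calc ∑ j ∈ univ.erase i,
        (((succC D j).card : ℤ) - ((succC (removeNode D i) j).card : ℤ))
        ≤ ∑ j ∈ univ.erase i,
            ((((succC D j).card : ℤ) - ((dsucc D j).card : ℤ))
              + (if (j, i) ∈ D then (1:ℤ) else 0)) := Finset.sum_le_sum hup
      _ = (∑ j ∈ univ.erase i, (((succC D j).card : ℤ) - ((dsucc D j).card : ℤ)))
            + ∑ j ∈ univ.erase i, (if (j, i) ∈ D then (1:ℤ) else 0) :=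
          Finset.sum_add_distrib
      _ ≤ _ := by
          rw [Finset.sum_boole, hdp]
          have : ((dpred D i).card : ℤ) ≤ ((predC D i).card : ℤ) := by exact_mod_cast hdpc
          linarith
  have hSmax : ∑ j ∈ univ.erase i, (((succC D j).card : ℤ) - ((dsucc D j).card : ℤ))
      ≤ maxBrokerage D := by
    unfold maxBrokerage
    exact Finset.sum_le_sum_of_subset_of_nonneg (Finset.erase_subset i univ)
      (fun j _ _ => hterm_nonneg j)
  have hbB : brokerage D i ≤ max (maxBrokerage D) 1 := by
    unfold brokerage
    have := le_max_left (maxBrokerage D) 1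
    linarith
  -- conclude
  have hden : (0:ℚ) < ((max (maxBrokerage D) 1 : ℤ) : ℚ) := by
    have : (1:ℤ) ≤ max (maxBrokerage D) 1 := le_max_right _ _
    exact_mod_cast lt_of_lt_of_le one_pos this
  constructor
  · exact div_nonneg (by exact_mod_cast hb0) hden.le
  · rw [power, div_le_one hden]
    exact_mod_cast hbB
end

section
/- Let D be a directed network on node set N. Every middleman has strictly positive middleman power: for every i ∈ M(D), ν_i(D) > 0 (equivalently, its brokerage b_i(D) ≥ 1). -/
open Finset

variable {V : Type*} [Fintype V] [DecidableEq V]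

section Aux

variable {V : Type*} [Fintype V] [DecidableEq V]

lemma aux_conn_mono {D D' : Finset (V × V)} (h : D ⊆ D') {a b : V} :
    Conn D a b → Conn D' a b := by
  rintro ⟨l, h1, h2, h3⟩
  exact ⟨l, h1, h2.imp (fun _ _ hx => h hx), h3⟩

lemma aux_arc_of_mem_path {D : Finset (V × V)} {l : List V}
    (hc : l.Chain' (fun a b => (a, b) ∈ D)) (hlen : 2 ≤ l.length) {x : V} (hx : x ∈ l) :
    ∃ y, (x, y) ∈ D ∨ (y, x) ∈ D := by
  obtain ⟨s, t, rfl⟩ := List.append_of_mem hx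
  rw [List.Chain', List.isChain_append] at hc
  match t with
  | b :: t' => exact ⟨b, Or.inl (List.isChain_cons_cons.mp hc.2.1).1⟩
  | [] =>
    match s with
    | [] => simp at hlen
    | a :: s' =>
      refine ⟨(a :: s').getLast (by simp), Or.inr ?_⟩
      exact hc.2.2 _ (Option.mem_def.mpr (List.getLast?_eq_getLast (l := a :: s') (by simp))) x rfl

lemma aux_not_mem_removeNode {D : Finset (V × V)} {i p q : V} {l : List V}
    (hp : IsPath (removeNode D i) p q l) : i ∉ l := by
  intro hi
  obtain ⟨y, hy | hy⟩ := aux_arc_of_mem_path hp.2.1 hp.2.2.2.2 hi <;>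
    simp [removeNode, Finset.mem_filter] at hy

lemma aux_conn_prefix {D : Finset (V × V)} {p q i : V} (hip : i ≠ p) {l : List V}
    (hl : IsPath D p q l) (hi : i ∈ l) : Conn D p i := by
  obtain ⟨s, t, rfl⟩ := List.append_of_mem hi
  have hs : s ≠ [] := by
    rintro rfl
    simp only [List.nil_append, List.head?_cons] at hl
    have := hl.2.2.1
    simp only [List.nil_append, List.head?_cons, Option.some.injEq] at this
    exact hip this
  refine ⟨s ++ [i], ?_, ?_, ?_, ?_, ?_⟩
  · exact hl.1.sublist (by simpa using List.Sublist.append_left (by simp) s)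
  · exact hl.2.1.prefix ⟨t, by simp⟩
  · obtain ⟨a, s', rfl⟩ := List.exists_cons_of_ne_nil hs
    have := hl.2.2.1
    simpa using this
  · simp
  · have : 1 ≤ s.length := List.length_pos_iff.mpr hs
    simp [List.length_append]
    omega

lemma aux_mem_succC {D : Finset (V × V)} {a b : V} : b ∈ succC D a ↔ Conn D a b := by
  classical
  simp [succC]

lemma aux_mem_predC {D : Finset (V × V)} {a b : V} : b ∈ predC D a ↔ Conn D b a := by
  classical
  simp [predC]

lemma aux_not_conn_removeNode_to {D : Finset (V × V)} {i j : V} :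
    ¬ Conn (removeNode D i) j i := by
  rintro ⟨l, hl⟩
  exact aux_not_mem_removeNode hl
    (List.mem_of_mem_getLast? (Option.mem_def.mpr hl.2.2.2.1))

end Aux

/-- Every middleman has strictly positive middleman power (equivalently, its
brokerage is at least 1). -/
theorem statement13 {V : Type*} [Fintype V] [DecidableEq V] (D : Finset (V × V))
    (hirr : IrreflArcs D) (i : V) (hm : IsMiddleman D i) :
    0 < power D i ∧ 1 ≤ brokerage D i := by
  classical
  obtain ⟨-, p, q, hpq, hip, hiq, hconn, hall⟩ := hm
  -- basic facts
  have hrm : removeNode D i ⊆ D := Finset.filter_subset _ _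
  -- p is connected to i
  have hpi : Conn D p i := by
    obtain ⟨l, hl⟩ := hconn
    exact aux_conn_prefix hip hl (hall l hl)
  have hpP : p ∈ predC D i := aux_mem_predC.mpr hpi
  -- i is not its own predecessor
  have hiP : i ∉ predC D i := by
    rw [aux_mem_predC]
    rintro ⟨l, h1, h2, h3, h4, h5⟩
    have hne : l ≠ [] := by rintro rfl; simp at h5
    have : i = l.getLast hne := by
      have h6 := List.getLast?_eq_getLast (l := l) hne
      rw [h6] at h4; exact (Option.some.inj h4).symm
    have hhead : l.head hne = i := by
      have h7 := List.head?_eq_head (l := l) hne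
      rw [h7] at h3; exact Option.some.inj h3
    -- head ≠ last for nodup list of length ≥ 2
    obtain ⟨a, t, rfl⟩ := List.exists_cons_of_ne_nil hne
    obtain ⟨b, t', rfl⟩ := List.exists_cons_of_ne_nil
      (by rintro rfl; simp at h5 : t ≠ [])
    simp only [List.head_cons] at hhead
    subst hhead
    have : a ∈ b :: t' := by
      rw [this]
      exact List.getLast_mem _
    exact (List.nodup_cons.mp h1).1 this
  -- per-node inequalities
  set f : V → ℤ := fun j => ((succC D j).card : ℤ) - ((succC (removeNode D i) j).card : ℤ)
    with hf
  set g : V → ℤ := fun j =>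
    (if j ∈ predC D i then (1 : ℤ) else 0) + (if j = p then (1 : ℤ) else 0) with hg
  have hsub : ∀ j : V, succC (removeNode D i) j ⊆ succC D j := by
    intro j x hx
    exact aux_mem_succC.mpr (aux_conn_mono hrm (aux_mem_succC.mp hx))
  have hinotin : ∀ j : V, i ∉ succC (removeNode D i) j := by
    intro j hx
    exact aux_not_conn_removeNode_to (aux_mem_succC.mp hx)
  have hqp : q ∉ succC (removeNode D i) p := by
    rw [aux_mem_succC]
    rintro ⟨l, hl⟩
    exact aux_not_mem_removeNode hl
      (hall l ⟨hl.1, hl.2.1.imp (fun _ _ hx => hrm hx), hl.2.2⟩)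
  have hle : ∀ j ∈ Finset.univ.erase i, g j ≤ f j := by
    intro j hj
    simp only [hf, hg]
    by_cases hjp : j = p
    · subst hjp
      have hiS : i ∈ succC D j := aux_mem_succC.mpr hpi
      have hqS : q ∈ succC D j := aux_mem_succC.mpr hconn
      have hsub2 : succC (removeNode D i) j ⊆ ((succC D j).erase q).erase i := by
        intro x hx
        exact Finset.mem_erase.mpr ⟨by rintro rfl; exact hinotin j hx,
          Finset.mem_erase.mpr ⟨by rintro rfl; exact hqp hx, hsub j hx⟩⟩
      have h1 := Finset.card_le_card hsub2
      have h2 : ((succC D j).erase q).card = (succC D j).card - 1 :=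
        Finset.card_erase_of_mem hqS
      have h3 : (((succC D j).erase q).erase i).card = ((succC D j).erase q).card - 1 :=
        Finset.card_erase_of_mem (Finset.mem_erase.mpr ⟨hiq, hiS⟩)
      have h4 : 1 ≤ ((succC D j).erase q).card :=
        Finset.card_pos.mpr ⟨i, Finset.mem_erase.mpr ⟨hiq, hiS⟩⟩
      have h5 : 1 ≤ (succC D j).card := Finset.card_pos.mpr ⟨q, hqS⟩
      simp only [hpP, if_true, if_pos rfl]
      omega
    · simp only [if_neg hjp, add_zero]
      by_cases hjP : j ∈ predC D i
      · have hiS : i ∈ succC D j := aux_mem_succC.mpr (aux_mem_predC.mp hjP)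
        have hsub2 : succC (removeNode D i) j ⊆ (succC D j).erase i := by
          intro x hx
          exact Finset.mem_erase.mpr ⟨by rintro rfl; exact hinotin j hx, hsub j hx⟩
        have h1 := Finset.card_le_card hsub2
        have h2 : ((succC D j).erase i).card = (succC D j).card - 1 :=
          Finset.card_erase_of_mem hiS
        have h5 : 1 ≤ (succC D j).card := Finset.card_pos.mpr ⟨i, hiS⟩
        simp only [hjP, if_true]
        omega
      · have h1 := Finset.card_le_card (hsub j)
        simp only [hjP, if_false]
        omega
  have hsumg : ∑ j ∈ Finset.univ.erase i, g j = ((predC D i).card : ℤ) + 1 := by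
    simp only [hg, Finset.sum_add_distrib]
    congr 1
    · rw [Finset.sum_ite_mem]
      rw [Finset.sum_const]
      have : (Finset.univ.erase i) ∩ (predC D i) = predC D i := by
        apply Finset.inter_eq_right.mpr
        intro x hx
        exact Finset.mem_erase.mpr ⟨by rintro rfl; exact hiP hx, Finset.mem_univ x⟩
      rw [this]
      simp
    · rw [Finset.sum_ite_eq' (Finset.univ.erase i) p (fun _ => (1:ℤ))]
      simp [Finset.mem_erase, Ne.symm hip]
  have hsum : ((predC D i).card : ℤ) + 1 ≤ ∑ j ∈ Finset.univ.erase i, f j := by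
    rw [← hsumg]
    exact Finset.sum_le_sum hle
  have hbrok : 1 ≤ brokerage D i := by
    unfold brokerage
    have : ∑ j ∈ Finset.univ.erase i,
        (((succC D j).card : ℤ) - ((succC (removeNode D i) j).card : ℤ))
        = ∑ j ∈ Finset.univ.erase i, f j := rfl
    rw [this]
    omega
  refine ⟨?_, hbrok⟩
  unfold power
  apply div_pos
  · exact_mod_cast lt_of_lt_of_le one_pos hbrok
  · exact_mod_cast lt_of_lt_of_le one_pos (le_max_right _ _)
end

section
/- Let D be a directed network on node set N and let i ∈ M(D) be a middleman in D. Then the robustness of i satisfies 1 ≤ ρ_i(D) ≤ min{b_i(D), d⁺_i + d⁻_i − 1}, where b_i(D) is the brokerage of i and d⁺_i, d⁻_i are the out- and in-degree of i. -/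
section walklemmas
variable {α : Type*}

lemma mw_dup_decomp {l : List α} (h : ¬ l.Nodup) :
    ∃ (x : α) (l₁ l₂ l₃ : List α), l = l₁ ++ x :: l₂ ++ x :: l₃ := by
  induction l with
  | nil => simp at h
  | cons a t ih =>
    by_cases hat : a ∈ t
    · obtain ⟨s, u, rfl⟩ := List.append_of_mem hat
      exact ⟨a, [], s, u, by simp⟩
    · have ht : ¬ t.Nodup := fun hn => h (List.nodup_cons.mpr ⟨hat, hn⟩)
      obtain ⟨x, l₁, l₂, l₃, rfl⟩ := ih ht
      exact ⟨x, a :: l₁, l₂, l₃, by simp⟩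

lemma mw_walk_of_tg {r : α → α → Prop} {a b : α} (h : Relation.TransGen r a b) :
    ∃ l : List α, l.Chain' r ∧ l.head? = some a ∧ l.getLast? = some b ∧ 2 ≤ l.length := by
  induction h with
  | single hr => exact ⟨[a, _], List.isChain_pair.mpr hr, rfl, rfl, by simp⟩
  | @tail c d htg hr ih =>
    obtain ⟨l, hc, hh, hg, h2⟩ := ih
    refine ⟨l ++ [d], ?_, ?_, ?_, ?_⟩
    · rw [List.Chain', List.isChain_append]
      refine ⟨hc, List.isChain_singleton _, ?_⟩
      intro x hx y hy
      simp at hy; subst hy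
      rw [hg] at hx; simp at hx; subst hx
      exact hr
    · rw [List.head?_append, hh]; rfl
    · rw [List.getLast?_append]; rfl
    · simp; omega

lemma mw_tg_of_walk {r : α → α → Prop} {a b : α} {l : List α} (hc : l.Chain' r)
    (hh : l.head? = some a) (hg : l.getLast? = some b) (h2 : 2 ≤ l.length) :
    Relation.TransGen r a b := by
  suffices H : ∀ (l : List α) (a : α), l.Chain' r → l.head? = some a →
      l.getLast? = some b → 2 ≤ l.length → Relation.TransGen r a b from
    H l a hc hh hg h2
  clear hc hh hg h2 l
  intro l
  induction l with
  | nil => intro a _ hh _ _; simp at hh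
  | cons x t ih =>
    intro a hc hh hg h2
    obtain rfl : a = x := by simpa [eq_comm] using hh
    rcases t with _ | ⟨y, t⟩
    · simp at h2
    · have hr : r a y := (List.isChain_cons_cons.mp hc).1
      have hc' := (List.isChain_cons_cons.mp hc).2
      rcases t with _ | ⟨z, t⟩
      · obtain rfl : y = b := by simpa using hg
        exact Relation.TransGen.single hr
      · have hrec := ih y hc' (by simp) (by simpa using hg) (by simp)
        exact (Relation.TransGen.single hr).trans hrec

lemma mw_nodup_walk {r : α → α → Prop} {a b : α} (hab : a ≠ b)
    (h : ∃ l : List α, l.Chain' r ∧ l.head? = some a ∧ l.getLast? = some b ∧ 2 ≤ l.length) :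
    ∃ l : List α, l.Nodup ∧ l.Chain' r ∧ l.head? = some a ∧ l.getLast? = some b ∧
      2 ≤ l.length := by
  classical
  have hex : ∃ n, ∃ l : List α, l.length = n ∧ l.Chain' r ∧ l.head? = some a ∧
      l.getLast? = some b ∧ 2 ≤ l.length := by
    obtain ⟨l, hl⟩ := h; exact ⟨l.length, l, rfl, hl⟩
  obtain ⟨l, hlen, hc, hh, hg, h2⟩ := Nat.find_spec hex
  refine ⟨l, ?_, hc, hh, hg, h2⟩
  by_contra hnd
  obtain ⟨x, l₁, l₂, l₃, rfl⟩ := mw_dup_decomp hnd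
  -- decompose the chain
  have hsplit1 : List.Chain' r (l₁ ++ (x :: (l₂ ++ x :: l₃))) := by
    simpa [List.append_assoc] using hc
  rw [List.Chain', List.isChain_append] at hsplit1
  obtain ⟨hc1, hc2, hlink⟩ := hsplit1
  have hc2' : List.Chain' r ((x :: l₂) ++ (x :: l₃)) := by
    rw [List.Chain', List.cons_append]; exact hc2
  rw [List.Chain', List.isChain_append] at hc2'
  -- the shortened list
  set l' : List α := l₁ ++ x :: l₃ with hl'
  have hc' : l'.Chain' r := by
    rw [hl', List.Chain', List.isChain_append]
    refine ⟨hc1, hc2'.2.1, ?_⟩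
    intro p hp y hy
    simp at hy; subst hy
    exact hlink p hp x (by simp)
  have hh' : l'.head? = some a := by
    rw [hl', List.head?_append]
    rw [show l₁ ++ x :: l₂ ++ x :: l₃ = l₁ ++ (x :: (l₂ ++ x :: l₃)) by simp,
      List.head?_append] at hh
    simpa using hh
  have hg' : l'.getLast? = some b := by
    rw [hl', List.getLast?_append]
    rw [show l₁ ++ x :: l₂ ++ x :: l₃ = (l₁ ++ x :: l₂) ++ (x :: l₃) by simp,
      List.getLast?_append] at hg
    obtain ⟨c, hc3⟩ : ∃ c, (x :: l₃).getLast? = some c :=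
      ⟨_, List.getLast?_eq_getLast_of_ne_nil (by simp)⟩
    rw [hc3] at hg ⊢
    simpa using hg
  have h2' : 2 ≤ l'.length := by
    rcases l₁ with _ | ⟨u, l₁⟩
    · rcases l₃ with _ | ⟨v, l₃⟩
      · exfalso
        simp [hl'] at hh' hg'
        exact hab (hh'.symm.trans hg')
      · simp [hl']
    · simp [hl']; omega
  have hlt : l'.length < Nat.find hex := by
    rw [← hlen]; simp [hl']
  exact Nat.find_min hex hlt ⟨l', rfl, hc', hh', hg', h2'⟩

lemma mw_chain'_ne {r : α → α → Prop} {i : α} (hr : ∀ x y, r x y → x ≠ i ∧ y ≠ i) :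
    ∀ l : List α, 2 ≤ l.length → l.Chain' r → ∀ x ∈ l, x ≠ i
  | [], h2, _, _, _ => by simp at h2
  | [x], h2, _, _, _ => by simp at h2
  | u :: v :: t, _, hc, x, hx => by
    have h1 := (List.isChain_cons_cons.mp hc).1
    have hc' := (List.isChain_cons_cons.mp hc).2
    rcases List.mem_cons.mp hx with rfl | hx'
    · exact (hr _ _ h1).1
    · rcases t with _ | ⟨z, t⟩
      · simp at hx'; subst hx'; exact (hr _ _ h1).2
      · exact mw_chain'_ne hr (v :: z :: t) (by simp) hc' x hx'

lemma mw_chain'_restrict {r : α → α → Prop} {i : α} :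
    ∀ l : List α, l.Chain' r → (∀ x ∈ l, x ≠ i) →
      l.Chain' (fun x y => r x y ∧ x ≠ i ∧ y ≠ i)
  | [], _, _ => List.isChain_nil
  | [x], _, _ => List.isChain_singleton x
  | u :: v :: t, hc, hm =>
    List.isChain_cons_cons.mpr ⟨⟨(List.isChain_cons_cons.mp hc).1, hm u (by simp), hm v (by simp)⟩,
      mw_chain'_restrict (v :: t) (List.isChain_cons_cons.mp hc).2
        (fun x hx => hm x (List.mem_cons_of_mem _ hx))⟩

lemma mw_ne_of_walk {l : List α} {a b : α} (hnd : l.Nodup) (hh : l.head? = some a)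
    (hg : l.getLast? = some b) (h2 : 2 ≤ l.length) : a ≠ b := by
  rcases l with _ | ⟨u, t⟩
  · simp at hh
  · obtain rfl : u = a := by simpa using hh
    rcases t with _ | ⟨v, t⟩
    · simp at h2
    · have hb : b ∈ v :: t := by
        rw [List.getLast?_cons_cons] at hg
        obtain ⟨hne, hEq⟩ := List.mem_getLast?_eq_getLast (x := b) (by rw [hg]; rfl)
        exact hEq ▸ List.getLast_mem hne
      intro hEq; subst hEq
      exact (List.nodup_cons.mp hnd).1 hb
end walklemmas


open Finset

variable {V : Type*} [Fintype V] [DecidableEq V]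

section netlemmas
variable {V : Type*} [Fintype V] [DecidableEq V]

lemma mw_conn_iff (D : Finset (V × V)) (a b : V) :
    Conn D a b ↔ a ≠ b ∧ Relation.TransGen (fun x y => (x, y) ∈ D) a b := by
  constructor
  · rintro ⟨l, hnd, hc, hh, hg, h2⟩
    exact ⟨mw_ne_of_walk hnd hh hg h2, mw_tg_of_walk hc hh hg h2⟩
  · rintro ⟨hab, htg⟩
    obtain ⟨l, hnd, hc, hh, hg, h2⟩ := mw_nodup_walk hab (mw_walk_of_tg htg)
    exact ⟨l, hnd, hc, hh, hg, h2⟩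

lemma mw_conn_avoid_iff (D : Finset (V × V)) (i a b : V) :
    (∃ l, IsPath D a b l ∧ i ∉ l) ↔
      a ≠ b ∧ Relation.TransGen (fun x y => (x, y) ∈ D ∧ x ≠ i ∧ y ≠ i) a b := by
  constructor
  · rintro ⟨l, ⟨hnd, hc, hh, hg, h2⟩, hi⟩
    refine ⟨mw_ne_of_walk hnd hh hg h2, ?_⟩
    have hc' := mw_chain'_restrict l hc (fun x hx hxi => hi (by rwa [hxi] at hx))
    exact mw_tg_of_walk hc' hh hg h2
  · rintro ⟨hab, htg⟩
    obtain ⟨l, hnd, hc, hh, hg, h2⟩ := mw_nodup_walk hab (mw_walk_of_tg htg)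
    have hci : ∀ x ∈ l, x ≠ i := mw_chain'_ne (fun x y hxy => ⟨hxy.2.1, hxy.2.2⟩) l h2 hc
    exact ⟨l, ⟨hnd, List.IsChain.imp (fun x y hxy => hxy.1) hc, hh, hg, h2⟩,
      fun hi => hci i hi rfl⟩

lemma mw_remove_iff (D : Finset (V × V)) (i a b : V) :
    Conn (removeNode D i) a b ↔
      a ≠ b ∧ Relation.TransGen (fun x y => (x, y) ∈ D ∧ x ≠ i ∧ y ≠ i) a b := by
  rw [mw_conn_iff]
  have hrel : (fun x y : V => (x, y) ∈ removeNode D i)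
      = fun x y => (x, y) ∈ D ∧ x ≠ i ∧ y ≠ i := by
    funext x y
    exact propext (by simp [removeNode, Finset.mem_filter])
  rw [hrel]

lemma mw_remove_conn (D : Finset (V × V)) (i a b : V) :
    Conn (removeNode D i) a b ↔ ∃ l, IsPath D a b l ∧ i ∉ l := by
  rw [mw_remove_iff, ← mw_conn_avoid_iff]

lemma mw_conn_mono {E F : Finset (V × V)} (hEF : E ⊆ F) {a b : V} (h : Conn E a b) :
    Conn F a b := by
  obtain ⟨l, h1, h2, h3, h4, h5⟩ := h
  exact ⟨l, h1, h2.imp (fun x y hxy => hEF hxy), h3, h4, h5⟩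

lemma mw_conn_ne {E : Finset (V × V)} {a b : V} (h : Conn E a b) : a ≠ b :=
  ((mw_conn_iff E a b).mp h).1

lemma mw_not_conn_remove_right (D : Finset (V × V)) (i a : V) :
    ¬ Conn (removeNode D i) a i := by
  rw [mw_remove_iff]
  rintro ⟨-, htg⟩
  obtain ⟨c, -, hr⟩ := (Relation.TransGen.tail'_iff).mp htg
  exact hr.2.2 rfl

lemma mw_mem_succC (D : Finset (V × V)) (j k : V) : k ∈ succC D j ↔ Conn D j k := by
  simp [succC]

lemma mw_mem_predC (D : Finset (V × V)) (j k : V) : k ∈ predC D j ↔ Conn D k j := by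
  simp [predC]

lemma mw_conn_of_arc {D : Finset (V × V)} {x y : V} (hxy : x ≠ y) (h : (x, y) ∈ D) :
    Conn D x y :=
  ⟨[x, y], by simp [hxy], List.isChain_pair.mpr h, rfl, rfl, by simp⟩
end netlemmas


section constructions
variable {V : Type*} [Fintype V] [DecidableEq V]

lemma mw_degree_construction (D : Finset (V × V)) (hirr : IrreflArcs D) (i : V)
    (hm : IsMiddleman D i) :
    ∃ D' : Finset (V × V), IrreflArcs D' ∧ D ⊂ D' ∧ ¬ IsMiddleman D' i ∧
      D'.card ≤ D.card + ((dsucc D i).card + (dpred D i).card - 1) := by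
  classical
  obtain ⟨h, hhmem⟩ := hm.1.1
  have hhD : (h, i) ∈ D := by simpa [dpred] using hhmem
  have hhi : h ≠ i := fun hEq => hirr i (by rwa [hEq] at hhD)
  set A : Finset (V × V) := ((dpred D i).erase h).image (fun p => (p, h)) ∪
      ((dsucc D i).erase h).image (fun s => (h, s)) with hA
  set D1 := D ∪ A with hD1
  have hAmem : ∀ x y : V, (x, y) ∈ A →
      ((x, i) ∈ D ∧ x ≠ h ∧ y = h) ∨ (x = h ∧ (i, y) ∈ D ∧ y ≠ h) := by
    intro x y hxy
    rw [hA, Finset.mem_union] at hxy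
    rcases hxy with hxy | hxy
    · obtain ⟨p, hp, hEq⟩ := Finset.mem_image.mp hxy
      obtain ⟨hpne, hpmem⟩ := Finset.mem_erase.mp hp
      cases hEq
      exact Or.inl ⟨by simpa [dpred] using hpmem, hpne, rfl⟩
    · obtain ⟨s, hs, hEq⟩ := Finset.mem_image.mp hxy
      obtain ⟨hsne, hsmem⟩ := Finset.mem_erase.mp hs
      cases hEq
      exact Or.inr ⟨rfl, by simpa [dsucc] using hsmem, hsne⟩
  have hAx : ∀ x y : V, (x, y) ∈ A → x ≠ i ∧ y ≠ i ∧ x ≠ y := by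
    intro x y hxy
    rcases hAmem x y hxy with ⟨hxD, hxh, rfl⟩ | ⟨rfl, hyD, hyh⟩
    · exact ⟨fun hEq => hirr i (by rwa [hEq] at hxD), hhi, hxh⟩
    · exact ⟨hhi, fun hEq => hirr i (by rwa [hEq] at hyD), fun hEq => hyh hEq.symm⟩
  have h1irr : IrreflArcs D1 := by
    intro x hx
    rw [hD1, Finset.mem_union] at hx
    rcases hx with hx | hx
    · exact hirr x hx
    · exact (hAx x x hx).2.2 rfl
  have hin : ∀ x, (x, i) ∈ D1 → (x, i) ∈ D := by
    intro x hx
    rw [hD1, Finset.mem_union] at hx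
    rcases hx with hx | hx
    · exact hx
    · exact absurd rfl (hAx x i hx).2.1
  have hout : ∀ y, (i, y) ∈ D1 → (i, y) ∈ D := by
    intro y hy
    rw [hD1, Finset.mem_union] at hy
    rcases hy with hy | hy
    · exact hy
    · exact absurd rfl (hAx i y hy).1
  have hparc : ∀ p, (p, i) ∈ D → p ≠ h → (p, h) ∈ D1 := by
    intro p hp hph
    refine Finset.mem_union_right _ (Finset.mem_union_left _ ?_)
    exact Finset.mem_image.mpr ⟨p, Finset.mem_erase.mpr ⟨hph, by simp [dpred, hp]⟩, rfl⟩
  have hsarc : ∀ s, (i, s) ∈ D → s ≠ h → (h, s) ∈ D1 := by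
    intro s hsD hsh
    refine Finset.mem_union_right _ (Finset.mem_union_right _ ?_)
    exact Finset.mem_image.mpr ⟨s, Finset.mem_erase.mpr ⟨hsh, by simp [dsucc, hsD]⟩, rfl⟩
  have hbypass : ∀ a b : V, a ≠ i → b ≠ i → a ≠ b →
      Relation.TransGen (fun x y => (x, y) ∈ D1) a b →
      Relation.TransGen (fun x y => (x, y) ∈ D1 ∧ x ≠ i ∧ y ≠ i) a b := by
    intro a b ha hb hab htg
    set r1 := fun x y => (x, y) ∈ D1 ∧ x ≠ i ∧ y ≠ i with hr1
    have key : ∀ y, Relation.TransGen (fun x y => (x, y) ∈ D1) a y →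
        ((y ≠ i → (Relation.TransGen r1 a y ∨ y = a)) ∧
         (y = i → (Relation.TransGen r1 a h ∨ h = a))) := by
      intro y hty
      induction hty with
      | @single y hr =>
        constructor
        · intro hy; exact Or.inl (Relation.TransGen.single ⟨hr, ha, hy⟩)
        · intro hyi
          by_cases hah : a = h
          · exact Or.inr hah.symm
          · exact Or.inl (Relation.TransGen.single
              ⟨hparc a (hin a (by rwa [hyi] at hr)) hah, ha, hhi⟩)
      | @tail y' y hty' hr ih =>
        by_cases hy' : y' = i
        · have hyD : (i, y) ∈ D := hout y (by rwa [hy'] at hr)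
          have hyne : y ≠ i := fun hEq => hirr i (by rwa [hEq] at hyD)
          have hih := ih.2 hy' 
          constructor
          · intro hy
            by_cases hyh : y = h
            · subst hyh; exact hih
            · have harc : r1 h y := ⟨hsarc y hyD hyh, hhi, hy⟩
              rcases hih with htg' | hha
              · exact Or.inl (htg'.tail harc)
              · exact Or.inl (Relation.TransGen.single (hha ▸ harc))
          · intro hEq; exact absurd hEq hyne
        · have hih := ih.1 hy'
          constructor
          · intro hy
            have harc : r1 y' y := ⟨hr, hy', hy⟩
            rcases hih with htg' | hEq
            · exact Or.inl (htg'.tail harc)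
            · exact Or.inl (Relation.TransGen.single (hEq ▸ harc))
          · intro hyi
            have hyD : (y', i) ∈ D := hin y' (by rwa [hyi] at hr)
            by_cases hyh : y' = h
            · subst hyh; exact hih
            · have harc : r1 y' h := ⟨hparc y' hyD hyh, hy', hhi⟩
              rcases hih with htg' | hEq
              · exact Or.inl (htg'.tail harc)
              · exact Or.inl (Relation.TransGen.single (hEq ▸ harc))
    rcases (key b htg).1 hb with htg' | hEq
    · exact htg'
    · exact absurd hEq.symm hab
  have hnm1 : ¬ IsMiddleman D1 i := by
    rintro ⟨-, a, b, hab, hia, hib, hconn, hall⟩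
    obtain ⟨-, htg⟩ := (mw_conn_iff D1 a b).mp hconn
    have htg' := hbypass a b (Ne.symm hia) (Ne.symm hib) hab htg
    obtain ⟨l, hl, hil⟩ := (mw_conn_avoid_iff D1 i a b).mpr ⟨hab, htg'⟩
    exact hil (hall l hl)
  have hsub : D ⊆ D1 := Finset.subset_union_left
  have hneq : D ≠ D1 := fun hEq => hnm1 (hEq ▸ hm)
  refine ⟨D1, h1irr, lt_of_le_of_ne hsub hneq, hnm1, ?_⟩
  have hc1 : D1.card ≤ D.card + A.card := Finset.card_union_le _ _
  have hc2 : A.card ≤ ((dpred D i).erase h).card + ((dsucc D i).erase h).card := by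
    refine le_trans (Finset.card_union_le _ _) ?_
    exact Nat.add_le_add (Finset.card_image_le) (Finset.card_image_le)
  have hc3 : ((dpred D i).erase h).card = (dpred D i).card - 1 :=
    Finset.card_erase_of_mem hhmem
  have hc4 : ((dsucc D i).erase h).card ≤ (dsucc D i).card := Finset.card_le_card
    (Finset.erase_subset _ _)
  have hd : 1 ≤ (dpred D i).card := Finset.card_pos.mpr ⟨h, hhmem⟩
  omega

lemma mw_brokerage_construction (D : Finset (V × V)) (hirr : IrreflArcs D) (i : V)
    (hm : IsMiddleman D i) :
    ∃ D' : Finset (V × V), IrreflArcs D' ∧ D ⊂ D' ∧ ¬ IsMiddleman D' i ∧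
      (D'.card : ℤ) ≤ (D.card : ℤ) + brokerage D i := by
  classical
  set Crit := Finset.univ.filter (fun e : V × V => e.1 ≠ i ∧ e.2 ≠ i ∧ Conn D e.1 e.2 ∧
      ¬ Conn (removeNode D i) e.1 e.2) with hCrit
  have hCmem : ∀ e : V × V, e ∈ Crit ↔ e.1 ≠ i ∧ e.2 ≠ i ∧ Conn D e.1 e.2 ∧
      ¬ Conn (removeNode D i) e.1 e.2 := by
    intro e; simp [hCrit]
  have hCD : ∀ e ∈ Crit, e ∉ D := by
    rintro ⟨x, y⟩ hc hxyD
    obtain ⟨hx, hy, hconn, hnc⟩ := (hCmem _).mp hc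
    have hxy : x ≠ y := mw_conn_ne hconn
    refine hnc (mw_conn_of_arc hxy ?_)
    simp [removeNode, Finset.mem_filter, hxyD, hx, hy]
  set D2 := D ∪ Crit with hD2
  have h2irr : IrreflArcs D2 := by
    intro x hx
    rw [hD2, Finset.mem_union] at hx
    rcases hx with hx | hx
    · exact hirr x hx
    · exact mw_conn_ne ((hCmem _).mp hx).2.2.1 rfl
  have hdisj : Disjoint D Crit := by
    rw [Finset.disjoint_left]
    exact fun e heD heC => hCD e heC heD
  have hnm2 : ¬ IsMiddleman D2 i := by
    rintro ⟨-, a, b, hab, hia, hib, hconn, hall⟩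
    obtain ⟨-, htg2⟩ := (mw_conn_iff D2 a b).mp hconn
    have htgD : Relation.TransGen (fun x y => (x, y) ∈ D) a b := by
      have hmono : Relation.TransGen (Relation.TransGen (fun x y => (x, y) ∈ D)) a b := by
        refine Relation.TransGen.mono ?_ a b htg2
        intro x y hxy
        rw [hD2, Finset.mem_union] at hxy
        rcases hxy with hxy | hxy
        · exact Relation.TransGen.single hxy
        · exact ((mw_conn_iff D x y).mp ((hCmem _).mp hxy).2.2.1).2
      rwa [Relation.transGen_idem] at hmono
    have hconnD : Conn D a b := (mw_conn_iff D a b).mpr ⟨hab, htgD⟩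
    by_cases hrc : Conn (removeNode D i) a b
    · obtain ⟨l, hl, hil⟩ := (mw_remove_conn D i a b).mp hrc
      obtain ⟨hl1, hl2, hl3, hl4, hl5⟩ := hl
      have hl2' : l.Chain' (fun x y => (x, y) ∈ D2) :=
        hl2.imp (fun x y hxy => Finset.mem_union_left _ hxy)
      exact hil (hall l ⟨hl1, hl2', hl3, hl4, hl5⟩)
    · have hcrit : (a, b) ∈ Crit := (hCmem _).mpr ⟨Ne.symm hia, Ne.symm hib, hconnD, hrc⟩
      have hpath : IsPath D2 a b [a, b] :=
        ⟨by simp [hab], List.isChain_pair.mpr (Finset.mem_union_right _ hcrit), rfl, rfl, by simp⟩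
      have hmem := hall [a, b] hpath
      simp at hmem
      rcases hmem with hmem | hmem
      · exact hia hmem
      · exact hib hmem
  obtain ⟨a0, b0, hab0, hia0, hib0, hconn0, hall0⟩ := hm.2
  have hcrit0 : (a0, b0) ∈ Crit := by
    refine (hCmem _).mpr ⟨Ne.symm hia0, Ne.symm hib0, hconn0, ?_⟩
    intro hrc
    obtain ⟨l, hl, hil⟩ := (mw_remove_conn D i a0 b0).mp hrc
    exact hil (hall0 l hl)
  have hsub : D ⊆ D2 := Finset.subset_union_left
  have hneq : D ≠ D2 := by
    intro hEq
    exact hCD _ hcrit0 (by rw [hEq]; exact Finset.mem_union_right _ hcrit0)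
  -- brokerage computation
  have hsubS : ∀ j, succC (removeNode D i) j ⊆ succC D j := by
    intro j k hk
    rw [mw_mem_succC] at hk ⊢
    exact mw_conn_mono (Finset.filter_subset _ _) hk
  set T : V → Finset V := fun j => succC D j \ succC (removeNode D i) j with hT
  set Crit' := Finset.univ.filter (fun e : V × V => e.1 ≠ i ∧ Conn D e.1 e.2 ∧
      ¬ Conn (removeNode D i) e.1 e.2) with hCrit'
  have hTmem : ∀ j k, k ∈ T j ↔ Conn D j k ∧ ¬ Conn (removeNode D i) j k := by
    intro j k
    rw [hT]
    simp [Finset.mem_sdiff, mw_mem_succC]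
  have hbiU : Crit' = (Finset.univ.erase i).biUnion (fun j => (T j).image (fun k => (j, k))) := by
    ext ⟨x, y⟩
    constructor
    · intro hmem
      obtain ⟨-, hx, hcxy, hncxy⟩ := Finset.mem_filter.mp hmem
      refine Finset.mem_biUnion.mpr ⟨x, Finset.mem_erase.mpr ⟨hx, Finset.mem_univ x⟩, ?_⟩
      exact Finset.mem_image.mpr ⟨y, (hTmem x y).mpr ⟨hcxy, hncxy⟩, rfl⟩
    · intro hmem
      obtain ⟨j, hj, hmem2⟩ := Finset.mem_biUnion.mp hmem
      obtain ⟨k, hk, hEq⟩ := Finset.mem_image.mp hmem2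
      cases hEq
      obtain ⟨hk1, hk2⟩ := (hTmem _ _).mp hk
      exact Finset.mem_filter.mpr ⟨Finset.mem_univ _, (Finset.mem_erase.mp hj).1, hk1, hk2⟩
  have hcard1 : Crit'.card = ∑ j ∈ Finset.univ.erase i, (T j).card := by
    rw [hbiU]
    rw [Finset.card_biUnion]
    · exact Finset.sum_congr rfl (fun j _ =>
        Finset.card_image_of_injective _ (fun k1 k2 hEq => by
          simpa using congrArg Prod.snd hEq))
    · intro j1 h1 j2 h2 hjne
      rw [Function.onFun, Finset.disjoint_left]
      rintro ⟨x, y⟩ hx1 hx2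
      obtain ⟨k1, -, hk1⟩ := Finset.mem_image.mp hx1
      obtain ⟨k2, -, hk2⟩ := Finset.mem_image.mp hx2
      cases hk1; cases hk2
      exact hjne rfl
  have hsplit : Crit'.card = Crit.card + (predC D i).card := by
    have h1 : Crit'.filter (fun e => ¬ e.2 = i) = Crit := by
      ext e
      simp only [hCrit', hCrit, Finset.mem_filter, Finset.mem_univ, true_and]
      tauto
    have h2 : Crit'.filter (fun e => e.2 = i) = (predC D i).image (fun j => (j, i)) := by
      ext ⟨x, y⟩
      constructor
      · intro hmem
        obtain ⟨hmem', hy⟩ := Finset.mem_filter.mp hmem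
        obtain ⟨-, hx, hc, -⟩ := Finset.mem_filter.mp hmem'
        have hy' : y = i := hy
        exact Finset.mem_image.mpr ⟨x, (mw_mem_predC D i x).mpr (by rwa [hy'] at hc),
          by rw [hy']⟩
      · intro hmem
        obtain ⟨j, hj, hEq⟩ := Finset.mem_image.mp hmem
        cases hEq
        have hc : Conn D x i := (mw_mem_predC D i x).mp hj
        refine Finset.mem_filter.mpr ⟨Finset.mem_filter.mpr
          ⟨Finset.mem_univ _, mw_conn_ne hc, hc, mw_not_conn_remove_right D i x⟩, rfl⟩
    have h3 : ((predC D i).image (fun j => (j, i))).card = (predC D i).card :=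
      Finset.card_image_of_injective _ (fun k1 k2 hEq => by
        simpa using congrArg Prod.fst hEq)
    have h4 := Finset.card_filter_add_card_filter_not
      (s := Crit') (p := fun e => e.2 = i)
    rw [h1, h2, h3] at h4
    omega
  have hterm : ∀ j, ((succC D j).card : ℤ) - ((succC (removeNode D i) j).card : ℤ)
      = ((T j).card : ℤ) := by
    intro j
    rw [hT]
    simp only
    rw [Finset.card_sdiff_of_subset (hsubS j), Nat.cast_sub (Finset.card_le_card (hsubS j))]
  have hbrok : brokerage D i = (Crit.card : ℤ) := by
    unfold brokerage
    rw [Finset.sum_congr rfl (fun j _ => hterm j), ← Nat.cast_sum, ← hcard1, hsplit]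
    push_cast
    ring
  refine ⟨D2, h2irr, lt_of_le_of_ne hsub hneq, hnm2, ?_⟩
  rw [hD2, Finset.card_union_of_disjoint hdisj, hbrok]
  push_cast
  ring_nf
  exact le_refl _
end constructions

/-- For every middleman `i`, `1 ≤ ρ_i(D) ≤ min{b_i(D), d⁺_i + d⁻_i − 1}`. -/
theorem statement14 {V : Type*} [Fintype V] [DecidableEq V] (D : Finset (V × V))
    (hirr : IrreflArcs D) (i : V) (hm : IsMiddleman D i) :
    1 ≤ robustness D i ∧
      (robustness D i : ℤ) ≤
        min (brokerage D i) (((dsucc D i).card : ℤ) + ((dpred D i).card : ℤ) - 1) := by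
  classical
  obtain ⟨D1, h1irr, h1ss, h1nm, h1card⟩ := mw_degree_construction D hirr i hm
  obtain ⟨D2, h2irr, h2ss, h2nm, h2card⟩ := mw_brokerage_construction D hirr i hm
  set S := {m : ℕ | ∃ D' : Finset (V × V),
      IrreflArcs D' ∧ D ⊂ D' ∧ ¬ IsMiddleman D' i ∧ D'.card = m} with hS
  have hrob : robustness D i = sInf S - D.card := rfl
  have hm1 : D1.card ∈ S := ⟨D1, h1irr, h1ss, h1nm, rfl⟩
  have hm2 : D2.card ∈ S := ⟨D2, h2irr, h2ss, h2nm, rfl⟩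
  have hlow : ∀ m ∈ S, D.card + 1 ≤ m := by
    rintro m ⟨D', -, hss, -, rfl⟩
    exact Nat.succ_le_of_lt (Finset.card_lt_card hss)
  have hne : S.Nonempty := ⟨_, hm1⟩
  have hge : D.card + 1 ≤ sInf S := hlow _ (Nat.sInf_mem hne)
  have hle1 : sInf S ≤ D1.card := Nat.sInf_le hm1
  have hle2 : sInf S ≤ D2.card := Nat.sInf_le hm2
  constructor
  · rw [hrob]; omega
  · rw [hrob]
    have hcast : ((sInf S - D.card : ℕ) : ℤ) = ((sInf S : ℕ) : ℤ) - (D.card : ℤ) :=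
      Nat.cast_sub (by omega)
    rw [hcast]
    refine le_min ?_ ?_
    · have h2 : ((sInf S : ℕ) : ℤ) ≤ (D2.card : ℤ) := by exact_mod_cast hle2
      linarith
    · have hd : 1 ≤ (dpred D i).card := Finset.card_pos.mpr hm.1.1
      have h1 : ((sInf S : ℕ) : ℤ) ≤ (D1.card : ℤ) := by exact_mod_cast hle1
      have h1c : (D1.card : ℤ) ≤ (D.card : ℤ) + ((dsucc D i).card : ℤ)
          + ((dpred D i).card : ℤ) - 1 := by
        have := h1card
        have hcast2 : (((dsucc D i).card + (dpred D i).card - 1 : ℕ) : ℤ)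
            = ((dsucc D i).card : ℤ) + ((dpred D i).card : ℤ) - 1 := by
          rw [Nat.cast_sub (by omega)]
          push_cast
          ring
        calc (D1.card : ℤ) ≤ ((D.card + ((dsucc D i).card + (dpred D i).card - 1) : ℕ) : ℤ) := by
              exact_mod_cast h1card
          _ = (D.card : ℤ) + ((dsucc D i).card : ℤ) + ((dpred D i).card : ℤ) - 1 := by
              push_cast [hcast2]; ring
      linarith
end

section
/- Let D be a directed network on node set N and let i ∈ M(D) be a middleman in D. Then the dual robustness of i satisfies 1 ≤ ρ*_i(D) ≤ min{d⁺_i, d⁻_i}, where d⁺_i and d⁻_i are the out- and in-degree of i. -/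
open Finset

variable {V : Type*} [Fintype V] [DecidableEq V]

lemma not_mm_of_dsucc_empty {D : Finset (V × V)} {i : V} (h : dsucc D i = ∅) :
    ¬ IsMiddleman D i := by
  rintro ⟨⟨_, hs, _⟩, _⟩
  simp [h] at hs

lemma not_mm_of_dpred_empty {D : Finset (V × V)} {i : V} (h : dpred D i = ∅) :
    ¬ IsMiddleman D i := by
  rintro ⟨⟨hp, _, _⟩, _⟩
  simp [h] at hp

lemma card_out (D : Finset (V × V)) (i : V) :
    (D.filter fun e => e.1 = i).card = (dsucc D i).card := by
  apply Finset.card_nbij' (fun e => e.2) (fun j => (i, j))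
  · rintro ⟨a, b⟩ he
    simp only [Finset.mem_coe, Finset.mem_filter] at he
    simp [dsucc, ← he.2, he.1]
  · intro j hj
    simp only [dsucc, Finset.mem_coe, Finset.mem_filter] at hj
    simp [hj.2]
  · rintro ⟨a, b⟩ he
    simp only [Finset.mem_coe, Finset.mem_filter] at he
    simp [he.2]
  · intro j hj; rfl

lemma card_in (D : Finset (V × V)) (i : V) :
    (D.filter fun e => e.2 = i).card = (dpred D i).card := by
  apply Finset.card_nbij' (fun e => e.1) (fun j => (j, i))
  · rintro ⟨a, b⟩ he
    simp only [Finset.mem_coe, Finset.mem_filter] at he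
    simp [dpred, ← he.2, he.1]
  · intro j hj
    simp only [dpred, Finset.mem_coe, Finset.mem_filter] at hj
    simp [hj.2]
  · rintro ⟨a, b⟩ he
    simp only [Finset.mem_coe, Finset.mem_filter] at he
    simp [he.2]
  · intro j hj; rfl

/-- For every middleman `i`, `1 ≤ ρ*_i(D) ≤ min{d⁺_i, d⁻_i}`. -/
theorem statement15 {V : Type*} [Fintype V] [DecidableEq V] (D : Finset (V × V))
    (hirr : IrreflArcs D) (i : V) (hm : IsMiddleman D i) :
    1 ≤ dualRobustness D i ∧
      dualRobustness D i ≤ min (dsucc D i).card (dpred D i).card := by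
  classical
  set S : Set ℕ := {m : ℕ | ∃ D' : Finset (V × V),
      D' ⊆ D ∧ ¬ IsMiddleman D' i ∧ D'.card = m} with hS
  have hbdd : BddAbove S := by
    refine ⟨D.card, ?_⟩
    rintro m ⟨D', hsub, _, rfl⟩
    exact Finset.card_le_card hsub
  -- empty set witnesses membership
  have h0 : (0 : ℕ) ∈ S := ⟨∅, by simp, not_mm_of_dsucc_empty (by simp [dsucc]), by simp⟩
  have hne : S.Nonempty := ⟨0, h0⟩
  -- D has at least one arc
  have hDpos : 0 < D.card := by
    obtain ⟨⟨⟨p, hp⟩, _, _⟩, _⟩ := hm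
    simp only [dpred, Finset.mem_filter] at hp
    exact Finset.card_pos.2 ⟨(p, i), hp.2⟩
  -- sSup S ≤ D.card - 1
  have hsup_lt : sSup S ≤ D.card - 1 := by
    apply csSup_le hne
    rintro m ⟨D', hsub, hnm, rfl⟩
    have hlt : D'.card < D.card := by
      rcases lt_or_eq_of_le (Finset.card_le_card hsub) with h | h
      · exact h
      · exact absurd (Finset.eq_of_subset_of_card_le hsub h.ge ▸ hm) hnm
    omega
  -- removing outgoing arcs
  have hout : D.card - (dsucc D i).card ∈ S := by
    refine ⟨D.filter fun e => e.1 ≠ i, Finset.filter_subset _ _, ?_, ?_⟩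
    · apply not_mm_of_dsucc_empty
      ext j
      simp [dsucc]
    · have := Finset.card_filter_add_card_filter_not
        (s := D) (p := fun e => e.1 = i)
      rw [← card_out D i]
      simp only [ne_eq] at this ⊢
      omega
  have hin : D.card - (dpred D i).card ∈ S := by
    refine ⟨D.filter fun e => e.2 ≠ i, Finset.filter_subset _ _, ?_, ?_⟩
    · apply not_mm_of_dpred_empty
      ext j
      simp [dpred]
    · have := Finset.card_filter_add_card_filter_not
        (s := D) (p := fun e => e.2 = i)
      rw [← card_in D i]
      simp only [ne_eq] at this ⊢
      omega
  have h1 := le_csSup hbdd hout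
  have h2 := le_csSup hbdd hin
  unfold dualRobustness
  rw [← hS]
  constructor
  · omega
  · simp only [le_min_iff]
    omega
end
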